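/- Let 𝔤 be a finite-dimensional complex Lie algebra equipped with a conjugation σ that is moreover a Lie algebra automorphism (σ(⁅x,y⁆) = ⁅σ(x),σ(y)⁆). Suppose 𝔤 = I₁ ⊕ I₂ is an internal direct sum of two Lie ideals with σ(I₁) = I₁ and σ(I₂) = I₂, each Iⱼ being a semisimple complex Lie algebra. Let e = e₁ + e₂ with eⱼ ∈ Iⱼ, σ(e) = e, and ad(e) nilpotent. Assume for j = 1, 2: every complex Lie subalgebra Eⱼ ⊆ Iⱼ containing {x ∈ Iⱼ : ⁅x, eⱼ⁆ = 0} and satisfying Eⱼ + σ(Eⱼ) = Iⱼ equals Iⱼ. Then every complex Lie subalgebra E ⊆ 𝔤 containing {x ∈ 𝔤 : ⁅x, e⁆ = 0} and satisfying E + σ(E) = 𝔤 equals 𝔤. -/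

import Mathlib

/-- In a semisimple Lie algebra, an ideal containing the centralizer of an element is
the whole algebra. -/
lemma aux_ideal_eq_top {L : Type*} [LieRing L] [LieAlgebra ℂ L]
    [LieAlgebra.IsSemisimple ℂ L] (N : LieIdeal ℂ L) (e : L)
    (hctr : ∀ x : L, ⁅x, e⁆ = 0 → x ∈ N) : N = ⊤ := by
  have hc : IsCompl N Nᶜ := isCompl_compl
  have hbot : ∀ x : L, x ∈ N → x ∈ Nᶜ → x = 0 := by
    intro x h1 h2
    have hx : x ∈ N ⊓ Nᶜ := ⟨h1, h2⟩
    rw [hc.inf_eq_bot] at hx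
    simpa using hx
  have he : e ∈ N ⊔ Nᶜ := by rw [hc.sup_eq_top]; exact LieSubmodule.mem_top e
  obtain ⟨n, hn, c, hcC, hnc⟩ := (LieSubmodule.mem_sup N Nᶜ e).mp he
  have hcn : ⁅c, n⁆ = 0 := by
    apply hbot
    · exact N.lie_mem hn
    · have h2 : ⁅n, c⁆ ∈ Nᶜ := Nᶜ.lie_mem hcC
      have h' : ⁅c, n⁆ = -⁅n, c⁆ := by rw [← lie_skew]
      rw [h']; exact neg_mem h2
  have hc0 : c = 0 := by
    apply hbot _ _ hcC
    apply hctr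
    rw [← hnc, lie_add, hcn, lie_self, add_zero]
  have hen : e = n := by rw [← hnc, hc0, add_zero]
  have hcbot : Nᶜ = ⊥ := by
    rw [eq_bot_iff]
    intro x hx
    rw [LieSubmodule.mem_bot]
    apply hbot _ _ hx
    apply hctr
    rw [hen]
    apply hbot
    · exact N.lie_mem hn
    · have h2 : ⁅n, x⁆ ∈ Nᶜ := Nᶜ.lie_mem hx
      have h' : ⁅x, n⁆ = -⁅n, x⁆ := by rw [← lie_skew]
      rw [h']; exact neg_mem h2
  have h := hc.sup_eq_top
  rw [hcbot, sup_bot_eq] at h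
  exact h

/-- Let `𝔤` be a finite-dimensional complex Lie algebra with a conjugation `σ`
which is a Lie algebra automorphism, and let `𝔤 = I₁ ⊕ I₂` be an internal direct sum of
σ-stable semisimple Lie ideals.  Let `e = e₁ + e₂` with `eⱼ ∈ Iⱼ`, `σ(e) = e` and `ad(e)`
nilpotent.  If for `j = 1, 2` every complex Lie subalgebra of `Iⱼ` containing the centralizer
of `eⱼ` in `Iⱼ` and summing with its conjugate to `Iⱼ` equals `Iⱼ`, then every complex Lie
subalgebra `E ⊆ 𝔤` containing the centralizer of `e` with `E + σ(E) = 𝔤` equals `𝔤`. -/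
theorem subalgebra_eq_top_of_summands {𝔤 : Type*} [LieRing 𝔤] [LieAlgebra ℂ 𝔤]
    [FiniteDimensional ℂ 𝔤]
    (σ : 𝔤 →ₛₗ[starRingEnd ℂ] 𝔤)
    (hσinv : ∀ x, σ (σ x) = x)
    (hσlie : ∀ x y, σ ⁅x, y⁆ = ⁅σ x, σ y⁆)
    (I₁ I₂ : LieIdeal ℂ 𝔤)
    (hcompl : IsCompl (I₁ : Submodule ℂ 𝔤) (I₂ : Submodule ℂ 𝔤))
    (hσI₁ : σ '' (I₁ : Set 𝔤) = I₁) (hσI₂ : σ '' (I₂ : Set 𝔤) = I₂)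
    (hss₁ : LieAlgebra.IsSemisimple ℂ I₁) (hss₂ : LieAlgebra.IsSemisimple ℂ I₂)
    (e₁ e₂ : 𝔤) (he₁ : e₁ ∈ I₁) (he₂ : e₂ ∈ I₂)
    (hσe : σ (e₁ + e₂) = e₁ + e₂)
    (hnil : IsNilpotent (LieAlgebra.ad ℂ 𝔤 (e₁ + e₂)))
    (h₁ : ∀ E : LieSubalgebra ℂ 𝔤, (E : Set 𝔤) ⊆ I₁ →
      (∀ x ∈ I₁, ⁅x, e₁⁆ = 0 → x ∈ E) →
      (∀ v ∈ I₁, ∃ a ∈ E, ∃ b ∈ E, v = a + σ b) →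
      (E : Set 𝔤) = I₁)
    (h₂ : ∀ E : LieSubalgebra ℂ 𝔤, (E : Set 𝔤) ⊆ I₂ →
      (∀ x ∈ I₂, ⁅x, e₂⁆ = 0 → x ∈ E) →
      (∀ v ∈ I₂, ∃ a ∈ E, ∃ b ∈ E, v = a + σ b) →
      (E : Set 𝔤) = I₂)
    (E : LieSubalgebra ℂ 𝔤)
    (hcent : ∀ x : 𝔤, ⁅x, e₁ + e₂⁆ = 0 → x ∈ E)
    (hsum : ∀ v : 𝔤, ∃ a ∈ E, ∃ b ∈ E, v = a + σ b) :
    E = ⊤ := by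
  classical
  haveI := hss₁; haveI := hss₂
  set π := (I₁ : Submodule ℂ 𝔤).linearProjOfIsCompl (I₂ : Submodule ℂ 𝔤) hcompl with hπ
  set p : 𝔤 → 𝔤 := fun v => (π v : 𝔤) with hp
  have hpI₁ : ∀ v, p v ∈ I₁ := fun v => (π v).2
  -- uniqueness of the decomposition
  have spec : ∀ {a b v : 𝔤}, a ∈ I₁ → b ∈ I₂ → v = a + b → p v = a := by
    intro a b v ha hb hv
    have h1 : π a = ⟨a, ha⟩ := Submodule.linearProjOfIsCompl_apply_left hcompl ⟨a, ha⟩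
    have h2 : π b = 0 := Submodule.linearProjOfIsCompl_apply_right' hcompl hb
    rw [hp, hv]
    simp only [map_add, h1, h2, add_zero]
  have hdecomp : ∀ v : 𝔤, ∃ a ∈ (I₁ : Submodule ℂ 𝔤), ∃ b ∈ (I₂ : Submodule ℂ 𝔤), v = a + b := by
    intro v
    have hv : v ∈ (I₁ : Submodule ℂ 𝔤) ⊔ (I₂ : Submodule ℂ 𝔤) := by
      rw [hcompl.sup_eq_top]; trivial
    obtain ⟨a, ha, b, hb, h⟩ := Submodule.mem_sup.mp hv
    exact ⟨a, ha, b, hb, h.symm⟩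
  have hpI₂ : ∀ v, v - p v ∈ I₂ := by
    intro v
    obtain ⟨a, ha, b, hb, h⟩ := hdecomp v
    rw [spec ha hb h, h]
    simpa using hb
  -- brackets between the two ideals vanish
  have hbr : ∀ x y : 𝔤, x ∈ I₁ → y ∈ I₂ → ⁅x, y⁆ = 0 := by
    intro x y hx hy
    have h1 : ⁅x, y⁆ ∈ (I₁ : Submodule ℂ 𝔤) := by
      have h' : ⁅y, x⁆ ∈ I₁ := I₁.lie_mem hx
      have h'' : ⁅x, y⁆ = -⁅y, x⁆ := by rw [← lie_skew]
      rw [h'']; exact neg_mem h'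
    have h2 : ⁅x, y⁆ ∈ (I₂ : Submodule ℂ 𝔤) := I₂.lie_mem hy
    have h3 : ⁅x, y⁆ ∈ (I₁ : Submodule ℂ 𝔤) ⊓ (I₂ : Submodule ℂ 𝔤) := ⟨h1, h2⟩
    rw [hcompl.inf_eq_bot] at h3
    simpa using h3
  -- σ-stability
  have hσmem₁ : ∀ x, x ∈ I₁ → σ x ∈ I₁ := by
    intro x hx
    have : σ x ∈ σ '' (I₁ : Set 𝔤) := Set.mem_image_of_mem σ hx
    rwa [hσI₁] at this
  have hσmem₂ : ∀ x, x ∈ I₂ → σ x ∈ I₂ := by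
    intro x hx
    have : σ x ∈ σ '' (I₂ : Set 𝔤) := Set.mem_image_of_mem σ hx
    rwa [hσI₂] at this
  -- σ commutes with the projection
  have hσp : ∀ v, p (σ v) = σ (p v) := by
    intro v
    refine spec (hσmem₁ _ (hpI₁ v)) (hσmem₂ _ (hpI₂ v)) ?_
    rw [← map_add]
    congr 1
    abel
  -- p respects brackets
  have hpbr : ∀ v w, p ⁅v, w⁆ = ⁅p v, p w⁆ := by
    intro v w
    refine spec (a := ⁅p v, p w⁆) (b := ⁅v - p v, w - p w⁆)
      (I₁.lie_mem (hpI₁ w)) (I₂.lie_mem (hpI₂ w)) ?_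
    have hv : v = p v + (v - p v) := by abel
    have hw : w = p w + (w - p w) := by abel
    calc ⁅v, w⁆ = ⁅p v + (v - p v), p w + (w - p w)⁆ := by rw [← hv, ← hw]
    _ = ⁅p v, p w⁆ + ⁅p v, w - p w⁆ + (⁅v - p v, p w⁆ + ⁅v - p v, w - p w⁆) := by
          rw [add_lie, lie_add, lie_add]
    _ = ⁅p v, p w⁆ + ⁅v - p v, w - p w⁆ := by
          rw [hbr _ _ (hpI₁ v) (hpI₂ w), add_zero,
            show ⁅v - p v, p w⁆ = -⁅p w, v - p v⁆ by rw [← lie_skew],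
            hbr _ _ (hpI₁ w) (hpI₂ v), neg_zero, zero_add]
  -- the image of E under p is a Lie subalgebra contained in I₁
  let S₁ : Submodule ℂ 𝔤 := E.toSubmodule.map ((I₁ : Submodule ℂ 𝔤).subtype.comp π)
  have hS₁ : ∀ x, x ∈ S₁ ↔ ∃ a ∈ E, p a = x := by
    intro x
    simp only [S₁, Submodule.mem_map, LinearMap.coe_comp, Function.comp_apply,
      Submodule.coe_subtype]
    rfl
  let E₁ : LieSubalgebra ℂ 𝔤 :=
    { toSubmodule := S₁
      lie_mem' := by
        rintro x y hx hy
        have hx' : x ∈ S₁ := hx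
        have hy' : y ∈ S₁ := hy
        rw [hS₁] at hx' hy'
        obtain ⟨a, ha, rfl⟩ := hx'
        obtain ⟨b, hb, rfl⟩ := hy'
        show ⁅p a, p b⁆ ∈ S₁
        rw [hS₁]
        exact ⟨⁅a, b⁆, E.lie_mem ha hb, hpbr a b⟩ }
  have hE₁mem : ∀ x, x ∈ E₁ ↔ ∃ a ∈ E, p a = x := fun x => hS₁ x
  -- the centralizer of e₁ + e₂ contains elements of I₁ centralizing e₁
  have hctr₁ : ∀ x ∈ I₁, ⁅x, e₁⁆ = 0 → x ∈ E := by
    intro x hx hxe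
    exact hcent x (by rw [lie_add, hxe, zero_add, hbr _ _ hx he₂])
  have hctr₂ : ∀ x ∈ I₂, ⁅x, e₂⁆ = 0 → x ∈ E := by
    intro x hx hxe
    apply hcent x
    rw [lie_add, hxe, add_zero,
      show ⁅x, e₁⁆ = -⁅e₁, x⁆ by rw [← lie_skew], hbr _ _ he₁ hx, neg_zero]
  have hpfix : ∀ x, x ∈ I₁ → p x = x := by
    intro x hx
    exact spec hx (Submodule.zero_mem _) (by rw [add_zero])
  -- E₁ = I₁
  have hE₁ : (E₁ : Set 𝔤) = I₁ := by
    apply h₁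
    · intro x hx
      rw [SetLike.mem_coe, hE₁mem] at hx
      obtain ⟨a, _, rfl⟩ := hx
      exact hpI₁ a
    · intro x hx hxe
      rw [hE₁mem]
      exact ⟨x, hctr₁ x hx hxe, hpfix x hx⟩
    · intro v hv
      obtain ⟨a, ha, b, hb, hab⟩ := hsum v
      refine ⟨p a, (hE₁mem _).mpr ⟨a, ha, rfl⟩, p b, (hE₁mem _).mpr ⟨b, hb, rfl⟩, ?_⟩
      rw [← hσp, ← hpfix v hv, hab, hp]
      simp [map_add]
      exact congrArg Subtype.val (map_add π _ _)
  have hsurj₁ : ∀ z, z ∈ I₁ → ∃ w ∈ E, p w = z := by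
    intro z hz
    have : z ∈ (E₁ : Set 𝔤) := by rw [hE₁]; exact hz
    rwa [SetLike.mem_coe, hE₁mem] at this
  -- the symmetric projection q onto I₂
  set q : 𝔤 → 𝔤 := fun v => v - p v with hq
  have hqI₂ : ∀ v, q v ∈ I₂ := hpI₂
  have hqfix : ∀ x, x ∈ I₂ → q x = x := by
    intro x hx
    have : p x = 0 := spec (Submodule.zero_mem _) hx (by rw [zero_add])
    rw [hq]; simp [this]
  have hσq : ∀ v, q (σ v) = σ (q v) := by
    intro v
    rw [hq]
    simp only
    rw [hσp, ← map_sub]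
  have hqbr : ∀ v w, q ⁅v, w⁆ = ⁅q v, q w⁆ := by
    intro v w
    rw [hq]
    simp only
    rw [hpbr]
    have hv : v = p v + (v - p v) := by abel
    have hw : w = p w + (w - p w) := by abel
    calc ⁅v, w⁆ - ⁅p v, p w⁆
        = ⁅p v + (v - p v), p w + (w - p w)⁆ - ⁅p v, p w⁆ := by rw [← hv, ← hw]
    _ = ⁅p v, p w⁆ + ⁅p v, w - p w⁆ + (⁅v - p v, p w⁆ + ⁅v - p v, w - p w⁆)
          - ⁅p v, p w⁆ := by rw [add_lie, lie_add, lie_add]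
    _ = ⁅v - p v, w - p w⁆ := by
          rw [hbr _ _ (hpI₁ v) (hpI₂ w),
            show ⁅v - p v, p w⁆ = -⁅p w, v - p v⁆ by rw [← lie_skew],
            hbr _ _ (hpI₁ w) (hpI₂ v)]
          abel
  -- the image of E under q is a Lie subalgebra contained in I₂
  let S₂ : Submodule ℂ 𝔤 := E.toSubmodule.map (LinearMap.id - (I₁ : Submodule ℂ 𝔤).subtype.comp π)
  have hS₂ : ∀ x, x ∈ S₂ ↔ ∃ a ∈ E, q a = x := by
    intro x
    simp only [S₂, Submodule.mem_map, LinearMap.sub_apply, LinearMap.id_apply,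
      LinearMap.coe_comp, Function.comp_apply, Submodule.coe_subtype]
    rfl
  let E₂ : LieSubalgebra ℂ 𝔤 :=
    { toSubmodule := S₂
      lie_mem' := by
        rintro x y hx hy
        have hx' : x ∈ S₂ := hx
        have hy' : y ∈ S₂ := hy
        rw [hS₂] at hx' hy'
        obtain ⟨a, ha, rfl⟩ := hx'
        obtain ⟨b, hb, rfl⟩ := hy'
        show ⁅q a, q b⁆ ∈ S₂
        rw [hS₂]
        exact ⟨⁅a, b⁆, E.lie_mem ha hb, hqbr a b⟩ }
  have hE₂mem : ∀ x, x ∈ E₂ ↔ ∃ a ∈ E, q a = x := fun x => hS₂ x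
  have hE₂ : (E₂ : Set 𝔤) = I₂ := by
    apply h₂
    · intro x hx
      rw [SetLike.mem_coe, hE₂mem] at hx
      obtain ⟨a, _, rfl⟩ := hx
      exact hqI₂ a
    · intro x hx hxe
      rw [hE₂mem]
      exact ⟨x, hctr₂ x hx hxe, hqfix x hx⟩
    · intro v hv
      obtain ⟨a, ha, b, hb, hab⟩ := hsum v
      refine ⟨q a, (hE₂mem _).mpr ⟨a, ha, rfl⟩, q b, (hE₂mem _).mpr ⟨b, hb, rfl⟩, ?_⟩
      rw [← hσq, ← hqfix v hv, hab, hq]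
      simp only
      rw [hp]
      simp only [map_add]
      push_cast
      abel
  have hsurj₂ : ∀ z, z ∈ I₂ → ∃ w ∈ E, q w = z := by
    intro z hz
    have : z ∈ (E₂ : Set 𝔤) := by rw [hE₂]; exact hz
    rwa [SetLike.mem_coe, hE₂mem] at this
  -- E ∩ I₁ is an ideal of I₁
  let N₁ : LieIdeal ℂ I₁ :=
    { toSubmodule := E.toSubmodule.comap (I₁ : Submodule ℂ 𝔤).subtype
      lie_mem := by
        intro x m hm
        have hm' : (m : 𝔤) ∈ E := hm
        show ((⁅x, m⁆ : I₁) : 𝔤) ∈ E.toSubmodule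
        obtain ⟨w, hw, hpw⟩ := hsurj₁ (x : 𝔤) x.2
        have hco : ((⁅x, m⁆ : I₁) : 𝔤) = ⁅(x : 𝔤), (m : 𝔤)⁆ := rfl
        rw [hco]
        have key : ⁅(x : 𝔤), (m : 𝔤)⁆ = ⁅w, (m : 𝔤)⁆ := by
          have h0 : ⁅w - p w, (m : 𝔤)⁆ = 0 := by
            rw [show ⁅w - p w, (m : 𝔤)⁆ = -⁅(m : 𝔤), w - p w⁆ by rw [← lie_skew],
              hbr _ _ m.2 (hpI₂ w), neg_zero]
          calc ⁅(x : 𝔤), (m : 𝔤)⁆ = ⁅p w, (m : 𝔤)⁆ := by rw [hpw]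
          _ = ⁅p w, (m : 𝔤)⁆ + ⁅w - p w, (m : 𝔤)⁆ := by rw [h0, add_zero]
          _ = ⁅w, (m : 𝔤)⁆ := by rw [← add_lie]; congr 1; abel
        rw [key]
        exact E.lie_mem hw hm' }
  have hN₁ : N₁ = ⊤ := by
    apply aux_ideal_eq_top N₁ ⟨e₁, he₁⟩
    intro x hx
    have hx' : ⁅(x : 𝔤), e₁⁆ = 0 := by
      have := congrArg (Subtype.val) hx
      simpa using this
    exact hctr₁ (x : 𝔤) x.2 hx'
  have hI₁E : ∀ x, x ∈ I₁ → x ∈ E := by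
    intro x hx
    have : (⟨x, hx⟩ : I₁) ∈ N₁ := by rw [hN₁]; trivial
    exact this
  -- E ∩ I₂ is an ideal of I₂
  let N₂ : LieIdeal ℂ I₂ :=
    { toSubmodule := E.toSubmodule.comap (I₂ : Submodule ℂ 𝔤).subtype
      lie_mem := by
        intro x m hm
        have hm' : (m : 𝔤) ∈ E := hm
        show ((⁅x, m⁆ : I₂) : 𝔤) ∈ E.toSubmodule
        obtain ⟨w, hw, hqw⟩ := hsurj₂ (x : 𝔤) x.2
        have hco : ((⁅x, m⁆ : I₂) : 𝔤) = ⁅(x : 𝔤), (m : 𝔤)⁆ := rfl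
        rw [hco]
        have key : ⁅(x : 𝔤), (m : 𝔤)⁆ = ⁅w, (m : 𝔤)⁆ := by
          have h0 : ⁅p w, (m : 𝔤)⁆ = 0 := hbr _ _ (hpI₁ w) m.2
          have hqw' : w - p w = (x : 𝔤) := hqw
          calc ⁅(x : 𝔤), (m : 𝔤)⁆ = ⁅w - p w, (m : 𝔤)⁆ := by rw [hqw']
          _ = ⁅p w, (m : 𝔤)⁆ + ⁅w - p w, (m : 𝔤)⁆ := by rw [h0, zero_add]
          _ = ⁅w, (m : 𝔤)⁆ := by rw [← add_lie]; congr 1; abel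
        rw [key]
        exact E.lie_mem hw hm' }
  have hN₂ : N₂ = ⊤ := by
    apply aux_ideal_eq_top N₂ ⟨e₂, he₂⟩
    intro x hx
    have hx' : ⁅(x : 𝔤), e₂⁆ = 0 := by
      have := congrArg (Subtype.val) hx
      simpa using this
    exact hctr₂ (x : 𝔤) x.2 hx'
  have hI₂E : ∀ x, x ∈ I₂ → x ∈ E := by
    intro x hx
    have : (⟨x, hx⟩ : I₂) ∈ N₂ := by rw [hN₂]; trivial
    exact this
  -- conclusion
  rw [eq_top_iff]
  intro v _
  have : v = p v + (v - p v) := by abel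
  rw [this]
  exact E.add_mem (hI₁E _ (hpI₁ v)) (hI₂E _ (hpI₂ v))
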